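/- For every n ≥ 0, the number of symmetric Dyck paths of length 2n equals the central binomial coefficient C(n, ⌊n/2⌋); that is, d_n = C(n, ⌊n/2⌋). -/

import Mathlib

/-- Value of a Dyck step: `true` is an up step (+1), `false` a down step (-1). -/
def stepVal (b : Bool) : ℤ := if b then 1 else -1

/-- Partial sum of the first `i` steps of the word `w`. -/
def psum {n : ℕ} (w : Fin n → Bool) (i : ℕ) : ℤ :=
  ∑ j : Fin n, if (j : ℕ) < i then stepVal (w j) else 0

/-- `d n`: number of symmetric Dyck paths of length `2n`, encoded by their left half,
a word in `{+1,-1}^n` with all partial sums nonnegative. -/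
noncomputable def d (n : ℕ) : ℕ := Set.ncard {w : Fin n → Bool | ∀ i ≤ n, 0 ≤ psum w i}

namespace SDaux

open Finset

variable {n : ℕ}

/-- the word stays nonnegative -/
def good (w : Fin n → Bool) : Prop := ∀ i ≤ n, 0 ≤ psum w i

instance : DecidablePred (good (n := n)) := fun w => by
  unfold good; infer_instance

/-- number of down steps -/
def dc (w : Fin n → Bool) : ℕ := (univ.filter fun j => w j = false).card

lemma psum_zero (w : Fin n → Bool) : psum w 0 = 0 := by simp [psum]

lemma psum_succ (w : Fin n → Bool) {i : ℕ} (h : i < n) :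
    psum w (i + 1) = psum w i + stepVal (w ⟨i, h⟩) := by
  have key : ∀ j : Fin n, (if (j : ℕ) < i + 1 then stepVal (w j) else 0)
      = (if (j : ℕ) < i then stepVal (w j) else 0)
        + (if j = ⟨i, h⟩ then stepVal (w j) else 0) := by
    intro j
    rcases lt_trichotomy (j : ℕ) i with hj | hj | hj
    · simp [hj, Nat.lt_succ_of_lt hj, Fin.ext_iff, hj.ne]
    · simp [hj, Fin.ext_iff]
    · have h1 : ¬ ((j : ℕ) < i + 1) := by omega
      have h2 : ¬ ((j : ℕ) < i) := by omega
      simp [h1, h2, Fin.ext_iff, hj.ne']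
  unfold psum
  rw [Finset.sum_congr rfl fun j _ => key j, Finset.sum_add_distrib,
    Finset.sum_ite_eq' univ (⟨i, h⟩ : Fin n)]
  simp

lemma psum_stable (w : Fin n → Bool) {i : ℕ} (h : n ≤ i) : psum w i = psum w n := by
  unfold psum
  refine Finset.sum_congr rfl fun j _ => ?_
  have : (j : ℕ) < n := j.isLt
  have h1 : (j : ℕ) < i := lt_of_lt_of_le this h
  simp [h1, this]

lemma psum_total (w : Fin n → Bool) : psum w n = (n : ℤ) - 2 * dc w := by
  have h1 : psum w n = ∑ j : Fin n, stepVal (w j) := by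
    unfold psum; exact Finset.sum_congr rfl fun j _ => by simp [j.isLt]
  have h2 : ∀ j : Fin n, stepVal (w j) = 1 - 2 * (if w j = false then (1 : ℤ) else 0) := by
    intro j; cases hwj : w j <;> simp [stepVal]
  rw [h1, Finset.sum_congr rfl fun j _ => h2 j, Finset.sum_sub_distrib]
  rw [← Finset.mul_sum, Finset.sum_boole]
  simp [dc, Finset.filter_filter]

lemma dc_le (w : Fin n → Bool) : dc w ≤ n := by
  simpa [dc] using Finset.card_le_card (Finset.filter_subset _ (univ : Finset (Fin n)))

lemma not_good_iff (w : Fin n → Bool) : ¬ good w ↔ ∃ i, psum w i < 0 := by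
  constructor
  · intro h
    simp only [good, not_forall] at h
    obtain ⟨i, _, hi⟩ := h
    exact ⟨i, by omega⟩
  · rintro ⟨i, hi⟩ hg
    rcases le_or_gt i n with h | h
    · exact absurd (hg i h) (by omega)
    · have := psum_stable w h.le
      have := hg n le_rfl
      omega

instance decBad (w : Fin n → Bool) : Decidable (∃ i, psum w i < 0) :=
  decidable_of_iff (∃ i ≤ n, psum w i < 0) (by
    constructor
    · rintro ⟨i, _, hi⟩; exact ⟨i, hi⟩
    · rintro ⟨i, hi⟩
      rcases le_or_gt i n with hle | hlt
      · exact ⟨i, hle, hi⟩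
      · exact ⟨n, le_rfl, by rw [← psum_stable w hlt.le]; exact hi⟩)

/-- first time the path is negative (junk value if never) -/
def ft (w : Fin n → Bool) : ℕ :=
  if h : ∃ i, psum w i < 0 then Nat.find h else 0

/-- reflection of the path after the first time it hits `-1` -/
def flip (w : Fin n → Bool) : Fin n → Bool :=
  fun j => if (j : ℕ) < ft w then w j else !(w j)

section Bad

variable {w : Fin n → Bool} (h : ∃ i, psum w i < 0)

include h

lemma psum_ft_neg : psum w (ft w) < 0 := by
  rw [ft, dif_pos h]; exact Nat.find_spec h

lemma psum_lt_ft {i : ℕ} (hi : i < ft w) : 0 ≤ psum w i := by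
  rw [ft, dif_pos h] at hi
  have := Nat.find_min h hi
  omega

lemma ft_pos : 0 < ft w := by
  rcases Nat.eq_zero_or_pos (ft w) with h0 | h0
  · have := psum_ft_neg h
    rw [h0, psum_zero] at this; omega
  · exact h0

lemma ft_le : ft w ≤ n := by
  by_contra hc
  push_neg at hc
  have h1 : 0 ≤ psum w n := psum_lt_ft h hc
  have h2 := psum_ft_neg h
  rw [psum_stable w (le_of_lt hc)] at h2
  omega

lemma psum_ft : psum w (ft w) = -1 := by
  have h0 : 0 < ft w := ft_pos h
  have hlt : ft w - 1 < n := by have := ft_le h; omega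
  have hs : psum w (ft w - 1 + 1) = psum w (ft w - 1) + stepVal (w ⟨ft w - 1, hlt⟩) :=
    psum_succ w hlt
  have he : ft w - 1 + 1 = ft w := by omega
  rw [he] at hs
  have h1 : 0 ≤ psum w (ft w - 1) := psum_lt_ft h (by omega)
  have h2 := psum_ft_neg h
  have h3 : stepVal (w ⟨ft w - 1, hlt⟩) = 1 ∨ stepVal (w ⟨ft w - 1, hlt⟩) = -1 := by
    cases w ⟨ft w - 1, hlt⟩ <;> simp [stepVal]
  rcases h3 with h3 | h3 <;> omega

lemma psum_flip_low {i : ℕ} (hi : i ≤ ft w) : psum (flip w) i = psum w i := by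
  unfold psum
  refine Finset.sum_congr rfl fun j _ => ?_
  by_cases hj : (j : ℕ) < i
  · have : (j : ℕ) < ft w := lt_of_lt_of_le hj hi
    simp [hj, flip, this]
  · simp [hj]

lemma psum_flip_high {i : ℕ} (hi : ft w ≤ i) (hin : i ≤ n) :
    psum (flip w) i = -2 - psum w i := by
  induction i, hi using Nat.le_induction with
  | base =>
    rw [psum_flip_low h le_rfl, psum_ft h]
    norm_num
  | succ i hi ih =>
    have hiN : i < n := by omega
    have hf : ¬ ((i : ℕ) < ft w) := by omega
    have e1 := psum_succ (flip w) hiN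
    have e2 := psum_succ w hiN
    have e3 : flip w ⟨i, hiN⟩ = !(w ⟨i, hiN⟩) := by simp [flip, hf]
    have e4 : stepVal (!(w ⟨i, hiN⟩)) = -stepVal (w ⟨i, hiN⟩) := by
      cases w ⟨i, hiN⟩ <;> simp [stepVal]
    rw [e1, e3, e4, ih (by omega), e2]
    ring

lemma bad_flip : ∃ i, psum (flip w) i < 0 := by
  refine ⟨ft w, ?_⟩
  rw [psum_flip_low h le_rfl, psum_ft h]
  norm_num

lemma ft_flip : ft (flip w) = ft w := by
  rw [ft, dif_pos (bad_flip h)]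
  rw [Nat.find_eq_iff]
  constructor
  · rw [psum_flip_low h le_rfl, psum_ft h]; norm_num
  · intro m hm
    rw [psum_flip_low h (le_of_lt hm)]
    have := psum_lt_ft h hm
    omega

lemma flip_flip : flip (flip w) = w := by
  funext j
  simp only [flip, ft_flip h]
  by_cases hj : (j : ℕ) < ft w <;> simp [hj]

lemma dc_flip : (dc (flip w) : ℤ) = (n : ℤ) + 1 - dc w := by
  have h1 := psum_total (flip w)
  have h2 := psum_total w
  have h3 := psum_flip_high h (ft_le h) le_rfl
  omega

end Bad

/-- all words with `k` down steps -/
def Wk (n k : ℕ) : Finset (Fin n → Bool) := univ.filter fun w => dc w = k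

/-- good words with `k` down steps -/
def Ak (n k : ℕ) : Finset (Fin n → Bool) := univ.filter fun w => good w ∧ dc w = k

/-- bad words with `k` down steps -/
def Bk (n k : ℕ) : Finset (Fin n → Bool) := univ.filter fun w => ¬ good w ∧ dc w = k

lemma card_Wk (k : ℕ) : (Wk n k).card = n.choose k := by
  classical
  have hpc := Finset.card_powersetCard k (univ : Finset (Fin n))
  rw [Finset.card_univ, Fintype.card_fin] at hpc
  rw [← hpc]
  refine Finset.card_bij' (fun w _ => univ.filter fun j => w j = false)
    (fun s _ => fun j => decide (j ∉ s)) ?_ ?_ ?_ ?_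
  · intro w hw
    simp only [Wk, mem_filter, mem_univ, true_and] at hw
    simp only [Finset.mem_powersetCard]
    exact ⟨Finset.filter_subset _ _, hw⟩
  · intro s hs
    simp only [Finset.mem_powersetCard] at hs
    simp only [Wk, mem_filter, mem_univ, true_and, dc]
    rw [← hs.2]
    refine Finset.mem_filter.mpr ⟨mem_univ _, ?_⟩
    congr 1
    ext j
    simp
  · intro w hw
    funext j
    simp only [Finset.mem_filter, Finset.mem_univ, true_and]
    cases hj : w j <;> simp [hj]
  · intro s hs
    ext j
    simp

lemma card_Ak_add_card_Bk (k : ℕ) : (Ak n k).card + (Bk n k).card = n.choose k := by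
  classical
  rw [← card_Wk k]
  rw [← Finset.card_filter_add_card_filter_not (s := Wk n k) (p := fun w => good w)]
  have h1 : (Wk n k).filter (fun w => good w) = Ak n k := by
    ext w
    simp only [Wk, Ak, Finset.mem_filter, Finset.mem_univ, true_and]
    tauto
  have h2 : (Wk n k).filter (fun w => ¬ good w) = Bk n k := by
    ext w
    simp only [Wk, Bk, Finset.mem_filter, Finset.mem_univ, true_and]
    tauto
  rw [h1, h2]

lemma card_Bk {k : ℕ} (hk1 : 1 ≤ k) (hk2 : k ≤ n / 2) :
    (Bk n k).card = n.choose (k - 1) := by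
  classical
  have hkn : k ≤ n := le_trans hk2 (Nat.div_le_self n 2)
  have key : (Bk n k).card = (Wk n (n + 1 - k)).card := by
    apply Finset.card_bij' (fun w _ => flip w) (fun w _ => flip w)
    · intro w hw
      simp only [Bk, mem_filter, mem_univ, true_and] at hw
      obtain ⟨hbadg, hdc⟩ := hw
      have hbad := (not_good_iff w).mp hbadg
      simp only [Wk, mem_filter, mem_univ, true_and]
      have := dc_flip hbad
      have h2 : ((n + 1 - k : ℕ) : ℤ) = (n : ℤ) + 1 - k := by omega
      omega
    · intro w hw
      simp only [Wk, mem_filter, mem_univ, true_and] at hw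
      have hbad : ∃ i, psum w i < 0 := by
        refine ⟨n, ?_⟩
        have := psum_total w
        omega
      simp only [Bk, mem_filter, mem_univ, true_and]
      constructor
      · rw [not_good_iff]
        exact bad_flip hbad
      · have := dc_flip hbad
        have h2 : ((n + 1 - k : ℕ) : ℤ) = (n : ℤ) + 1 - k := by omega
        omega
    · intro w hw
      simp only [Bk, mem_filter, mem_univ, true_and] at hw
      exact flip_flip ((not_good_iff w).mp hw.1)
    · intro w hw
      simp only [Wk, mem_filter, mem_univ, true_and] at hw
      have hbad : ∃ i, psum w i < 0 := by
        refine ⟨n, ?_⟩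
        have := psum_total w
        omega
      exact flip_flip hbad
  rw [key, card_Wk]
  have : n + 1 - k = n - (k - 1) := by omega
  rw [this, Nat.choose_symm (by omega)]

lemma card_Ak_zero : (Ak n 0).card = 1 := by
  have hAW : Ak n 0 = Wk n 0 := by
    ext w
    simp only [Ak, Wk, mem_filter, mem_univ, true_and, and_iff_right_iff_imp]
    intro hdc
    intro i _
    unfold psum
    apply Finset.sum_nonneg
    intro j _
    have hjt : w j = true := by
      by_contra hc
      have : j ∈ univ.filter fun j => w j = false := by
        simp [Bool.not_eq_true] at hc ⊢
        exact hc
      have := Finset.card_pos.mpr ⟨j, this⟩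
      rw [show (univ.filter fun j => w j = false).card = dc w from rfl, hdc] at this
      omega
    by_cases hj : (j : ℕ) < i <;> simp [hj, hjt, stepVal]
  rw [hAW, card_Wk, Nat.choose_zero_right]

lemma card_Ak {k : ℕ} (hk1 : 1 ≤ k) (hk2 : k ≤ n / 2) :
    (Ak n k).card + n.choose (k - 1) = n.choose k := by
  rw [← card_Bk hk1 hk2]
  exact card_Ak_add_card_Bk k

lemma telescope : ∀ m, m ≤ n / 2 →
    ∑ k ∈ Finset.range (m + 1), (Ak n k).card = n.choose m := by
  intro m
  induction m with
  | zero => intro _; simp [card_Ak_zero]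
  | succ m ih =>
    intro hm
    rw [Finset.sum_range_succ, ih (by omega)]
    have := card_Ak (k := m + 1) (by omega) hm
    simp only [Nat.add_sub_cancel] at this
    omega

theorem main : d n = Nat.choose n (n / 2) := by
  classical
  have hset : {w : Fin n → Bool | ∀ i ≤ n, 0 ≤ psum w i}
      = ↑(univ.filter (good (n := n))) := by
    ext w
    simp [good]
  rw [d, hset, Set.ncard_coe_finset]
  have hfib : (univ.filter (good (n := n))).card
      = ∑ k ∈ Finset.range (n / 2 + 1), ((univ.filter (good (n := n))).filter
          fun w => dc w = k).card := by
    apply Finset.card_eq_sum_card_fiberwise (f := dc)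
    intro w hw
    simp only [Finset.mem_coe, mem_filter, mem_univ, true_and] at hw
    have h1 := hw n le_rfl
    have h2 := psum_total w
    simp only [Finset.mem_coe, Finset.mem_range]
    omega
  rw [hfib]
  have hAk : ∀ k, ((univ.filter (good (n := n))).filter fun w => dc w = k) = Ak n k := by
    intro k
    rw [Ak, Finset.filter_filter]
  rw [Finset.sum_congr rfl fun k _ => by rw [hAk k]]
  exact telescope (n / 2) le_rfl

end SDaux

/-- The number of symmetric Dyck paths of length `2n` equals the
central binomial coefficient `C(n, ⌊n/2⌋)`. -/
theorem symmetric_dyck_count (n : ℕ) : d n = Nat.choose n (n / 2) := by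
  exact SDaux.main
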